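/- arXiv:2008.12503 — 5 statements merged into one kernel-verified Lean document; each statement's English description precedes it below -/
import Mathlib

section
/- A squarefree multilinear polynomial Q in variables x_1, x_{-1}, ..., x_n, x_{-n} over the reals is a polynomial in the variables y_k = x_k + x_{-k} (k = 1, ..., n) if and only if for every k in {1, ..., n}, the partial derivative of Q with respect to x_k equals the partial derivative of Q with respect to x_{-k}. -/
open MvPolynomial

section Stmt0Aux

variable {σ : Type*}

private lemma coeff_pderiv' (i : σ) (m : σ →₀ ℕ) (Q : MvPolynomial σ ℝ) :
    coeff m (pderiv i Q) = (m i + 1) * coeff (m + Finsupp.single i 1) Q := by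
  classical
  induction Q using MvPolynomial.induction_on' with
  | add p q hp hq => simp [coeff_add, hp, hq, mul_add]
  | monomial s a =>
    rw [pderiv_monomial, coeff_monomial, coeff_monomial]
    by_cases h : s = m + Finsupp.single i 1
    · subst h
      have h1 : m + Finsupp.single i 1 - Finsupp.single i 1 = m := by
        ext v; simp
      simp [h1, Finsupp.add_apply, Finsupp.single_eq_same, mul_comm]
    · rcases eq_or_ne (s i) 0 with hs | hs
      · rw [if_neg h, mul_zero]
        split_ifs <;> simp [hs]
      · have hsm : s - Finsupp.single i 1 ≠ m := by
          intro hm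
          apply h
          ext v
          have hv := DFunLike.congr_fun hm v
          simp only [Finsupp.sub_apply, Finsupp.add_apply, Finsupp.single_apply] at hv ⊢
          rcases eq_or_ne i v with rfl | hiv
          · simp at hv ⊢; omega
          · simp [hiv] at hv ⊢; omega
        rw [if_neg hsm, if_neg h, mul_zero]

private lemma mem_support_pderiv' {i : σ} {m : σ →₀ ℕ} {Q : MvPolynomial σ ℝ}
    (h : m ∈ (pderiv i Q).support) : m + Finsupp.single i 1 ∈ Q.support := by
  rw [mem_support_iff] at h ⊢
  rw [coeff_pderiv'] at h
  intro h0
  exact h (by rw [h0, mul_zero])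

private lemma pderiv_eq_zero' (i : σ) (Q : MvPolynomial σ ℝ)
    (h : ∀ m ∈ Q.support, m i = 0) : pderiv i Q = 0 := by
  apply MvPolynomial.ext
  intro m
  rw [coeff_pderiv', coeff_zero]
  rcases eq_or_ne (coeff (m + Finsupp.single i 1) Q) 0 with h0 | h0
  · rw [h0, mul_zero]
  · exfalso
    have h1 := h _ (mem_support_iff.2 h0)
    simp [Finsupp.add_apply, Finsupp.single_eq_same] at h1

private lemma pderiv_pderiv_comm' (i j : σ) (Q : MvPolynomial σ ℝ) :
    pderiv i (pderiv j Q) = pderiv j (pderiv i Q) := by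
  classical
  apply MvPolynomial.ext
  intro m
  rw [coeff_pderiv', coeff_pderiv', coeff_pderiv', coeff_pderiv']
  rcases eq_or_ne i j with rfl | hij
  · rfl
  · simp only [Finsupp.add_apply, Finsupp.single_apply, if_neg hij, if_neg (Ne.symm hij),
      add_zero]
    rw [add_right_comm]
    ring

private lemma eq_C_of_pderiv_eq_zero' {Q : MvPolynomial σ ℝ}
    (h : ∀ v, pderiv v Q = 0) : Q = C (coeff 0 Q) := by
  classical
  apply MvPolynomial.ext
  intro m
  rcases eq_or_ne m 0 with rfl | hm
  · simp
  · rw [coeff_C, if_neg (Ne.symm hm)]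
    obtain ⟨v, hv⟩ : ∃ v, m v ≠ 0 := by
      by_contra hc
      push_neg at hc
      exact hm (Finsupp.ext hc)
    have h2 := congrArg (coeff (m - Finsupp.single v 1)) (h v)
    rw [coeff_pderiv', coeff_zero] at h2
    have hmv : m - Finsupp.single v 1 + Finsupp.single v 1 = m := by
      ext w
      rcases eq_or_ne w v with rfl | hw
      · simp [Finsupp.sub_apply, Finsupp.add_apply, Finsupp.single_eq_same]; omega
      · simp [Finsupp.sub_apply, Finsupp.add_apply, Finsupp.single_apply, Ne.symm hw]
    rw [hmv] at h2
    rcases mul_eq_zero.1 h2 with h3 | h3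
    · exact absurd h3 (by positivity)
    · exact h3

private lemma sf_X_mul' {i : σ} {B : MvPolynomial σ ℝ}
    (hB : ∀ m ∈ B.support, ∀ v, m v ≤ 1)
    (hBi : ∀ m ∈ B.support, m i = 0) :
    ∀ m ∈ (X i * B).support, ∀ v, m v ≤ 1 := by
  intro m hm v
  rw [support_X_mul, Finset.mem_map] at hm
  obtain ⟨m', hm', rfl⟩ := hm
  simp only [addLeftEmbedding_apply, Finsupp.add_apply]
  rcases eq_or_ne v i with rfl | hv
  · simp [Finsupp.single_eq_same, hBi m' hm']
  · have := hB m' hm' v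
    simp [Finsupp.single_apply, Ne.symm hv]
    omega

private lemma key (n : ℕ) (s : Finset (Fin n)) :
    ∀ Q : MvPolynomial (Fin n × Bool) ℝ,
    (∀ m ∈ Q.support, ∀ v, m v ≤ 1) →
    (∀ k : Fin n, pderiv (k, true) Q = pderiv (k, false) Q) →
    (∀ k ∉ s, ∀ b, pderiv (k, b) Q = 0) →
    ∃ P : MvPolynomial (Fin n) ℝ,
      aeval (fun k : Fin n =>
        (X (k, true) + X (k, false) : MvPolynomial (Fin n × Bool) ℝ)) P = Q := by
  classical
  induction s using Finset.induction_on with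
  | empty =>
    intro Q hsf hd h0
    refine ⟨C (coeff 0 Q), ?_⟩
    rw [aeval_C, algebraMap_eq]
    have h0' : ∀ v : Fin n × Bool, pderiv v Q = 0 := by
      rintro ⟨k, b⟩
      exact h0 k (by simp) b
    exact (eq_C_of_pderiv_eq_zero' h0').symm
  | @insert k s' hk ih =>
    intro Q hsf hd h0
    set i : Fin n × Bool := (k, true) with hidef
    set j : Fin n × Bool := (k, false) with hjdef
    set B := pderiv i Q with hBdef
    have hQjB : pderiv j Q = B := (hd k).symm
    -- support facts about B
    have hBsf : ∀ m ∈ B.support, ∀ v, m v ≤ 1 := by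
      intro m hm v
      have h1 := hsf _ (mem_support_pderiv' hm) v
      simp only [Finsupp.add_apply] at h1
      omega
    have hBi0 : ∀ m ∈ B.support, m i = 0 := by
      intro m hm
      have h1 := hsf _ (mem_support_pderiv' hm) i
      simp [Finsupp.add_apply, Finsupp.single_eq_same] at h1
      omega
    have hBj0 : ∀ m ∈ B.support, m j = 0 := by
      intro m hm
      rw [← hQjB] at hm
      have h1 := hsf _ (mem_support_pderiv' hm) j
      simp [Finsupp.add_apply, Finsupp.single_eq_same] at h1
      omega
    have hpBi : pderiv i B = 0 := pderiv_eq_zero' i B hBi0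
    have hpBj : pderiv j B = 0 := pderiv_eq_zero' j B hBj0
    -- derivative hypotheses for B
    have hBd : ∀ k' : Fin n, pderiv (k', true) B = pderiv (k', false) B := by
      intro k'
      rw [hBdef, pderiv_pderiv_comm', hd k', pderiv_pderiv_comm']
    have hB0 : ∀ k' ∉ s', ∀ b, pderiv (k', b) B = 0 := by
      intro k' hk' b
      rcases eq_or_ne k' k with rfl | hne
      · cases b
        · exact hpBj
        · exact hpBi
      · have : k' ∉ insert k s' := by simp [hne, hk']
        rw [hBdef, pderiv_pderiv_comm', h0 k' this b, map_zero]
    obtain ⟨PB, hPB⟩ := ih B hBsf hBd hB0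
    -- the remainder A
    set A := Q - (X i + X j) * B with hAdef
    have hij : j ≠ i := by simp [hidef, hjdef]
    have hderivXsum : ∀ (k' : Fin n) (b : Bool),
        pderiv (k', b) ((X i + X j : MvPolynomial (Fin n × Bool) ℝ)) =
          if k' = k then 1 else 0 := by
      intro k' b
      rcases eq_or_ne k' k with rfl | hne
      · cases b <;>
          simp [hidef, hjdef, pderiv_X_self, pderiv_X_of_ne, hij, Ne.symm hij]
      · have h1 : i ≠ (k', b) := by simp [hidef, Ne.symm hne]
        have h2 : j ≠ (k', b) := by simp [hjdef, Ne.symm hne]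
        simp [map_add, pderiv_X_of_ne h1, pderiv_X_of_ne h2, hne]
    have hpA : ∀ (k' : Fin n) (b : Bool),
        pderiv (k', b) A =
          pderiv (k', b) Q - (if k' = k then B else 0)
            - (X i + X j) * pderiv (k', b) B := by
      intro k' b
      rw [hAdef, map_sub, pderiv_mul, hderivXsum k' b]
      split_ifs <;> ring
    have hAd : ∀ k' : Fin n, pderiv (k', true) A = pderiv (k', false) A := by
      intro k'
      rw [hpA k' true, hpA k' false, hd k', hBd k']
    have hA0 : ∀ k' ∉ s', ∀ b, pderiv (k', b) A = 0 := by
      intro k' hk' b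
      rw [hpA k' b]
      rcases eq_or_ne k' k with rfl | hne
      · have hb : pderiv (k', b) Q = B := by
          cases b
          · exact hQjB
          · rfl
        rw [hb, if_pos rfl]
        cases b
        · rw [hpBj]; ring
        · rw [hpBi]; ring
      · have hkk' : k' ∉ insert k s' := by simp [hne, hk']
        rw [h0 k' hkk' b, hB0 k' hk' b, if_neg hne]
        ring
    have hAsf : ∀ m ∈ A.support, ∀ v, m v ≤ 1 := by
      intro m hm v
      have hrw : A = Q - (X i * B + X j * B) := by rw [hAdef]; ring
      rw [hrw] at hm
      have h1 := MvPolynomial.support_sub _ Q (X i * B + X j * B) hm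
      rcases Finset.mem_union.1 h1 with h2 | h2
      · exact hsf m h2 v
      · have h3 := MvPolynomial.support_add h2
        rcases Finset.mem_union.1 h3 with h4 | h4
        · exact sf_X_mul' hBsf hBi0 m h4 v
        · exact sf_X_mul' hBsf hBj0 m h4 v
    obtain ⟨PA, hPA⟩ := ih A hAsf hAd hA0
    refine ⟨PA + X k * PB, ?_⟩
    rw [map_add, map_mul, aeval_X, hPA, hPB, hAdef]
    ring

private lemma forward' (n : ℕ) (P : MvPolynomial (Fin n) ℝ) (k : Fin n) :
    pderiv (k, true) (aeval (fun k : Fin n =>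
        (X (k, true) + X (k, false) : MvPolynomial (Fin n × Bool) ℝ)) P) =
      pderiv (k, false) (aeval (fun k : Fin n =>
        (X (k, true) + X (k, false) : MvPolynomial (Fin n × Bool) ℝ)) P) := by
  induction P using MvPolynomial.induction_on with
  | C a => simp
  | add p q hp hq => simp only [map_add, hp, hq]
  | mul_X p k' hp =>
    rw [map_mul, aeval_X, pderiv_mul, pderiv_mul, hp]
    congr 1
    congr 1
    rcases eq_or_ne k' k with rfl | h
    · have h1 : (k', false) ≠ (k', true) := by simp
      have h2 : (k', true) ≠ (k', false) := by simp
      rw [map_add, map_add, pderiv_X_self, pderiv_X_self,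
        pderiv_X_of_ne h1, pderiv_X_of_ne h2, add_zero, zero_add]
    · have h1 : (k', true) ≠ (k, true) := by simp [h]
      have h2 : (k', false) ≠ (k, true) := by simp [h]
      have h3 : (k', true) ≠ (k, false) := by simp [h]
      have h4 : (k', false) ≠ (k, false) := by simp [h]
      rw [map_add, map_add, pderiv_X_of_ne h1, pderiv_X_of_ne h2,
        pderiv_X_of_ne h3, pderiv_X_of_ne h4]

end Stmt0Aux

/-- A squarefree (multilinear) polynomial `Q` in the variables
`x_{k,+}, x_{k,-}` (`k = 1,…,n`) is a polynomial in the variables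
`y_k = x_{k,+} + x_{k,-}` iff `∂Q/∂x_{k,+} = ∂Q/∂x_{k,-}` for all `k`. -/
theorem stmt_0 (n : ℕ) (Q : MvPolynomial (Fin n × Bool) ℝ)
    (hsf : ∀ m ∈ Q.support, ∀ v, m v ≤ 1) :
    (∃ P : MvPolynomial (Fin n) ℝ,
        Q = aeval (fun k : Fin n => (X (k, true) + X (k, false) : MvPolynomial (Fin n × Bool) ℝ)) P)
      ↔ ∀ k : Fin n, pderiv (k, true) Q = pderiv (k, false) Q := by
  constructor
  · rintro ⟨P, rfl⟩ k
    exact forward' n P k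
  · intro hd
    obtain ⟨P, hP⟩ := key n Finset.univ Q hsf hd (fun k hk => absurd (Finset.mem_univ k) hk)
    exact ⟨P, hP.symm⟩
end

section
/- Let w be a homogeneous squarefree polynomial of degree i in R[x_1, x_{-1}, ..., x_n, x_{-n}] that is symmetric under the involution swapping x_k and x_{-k} for each k, and suppose that for every variable x_v the partial derivative ∂w/∂x_v is also symmetric under this involution. Then w can be written as a linear combination of products ∏_{k∈τ} (x_k + x_{-k}) over subsets τ ⊆ {1,...,n} of size i. -/
open MvPolynomial

namespace Stmt1Aux

lemma coeff_pderiv' {σ : Type*} [DecidableEq σ] (v : σ) (w : MvPolynomial σ ℝ) (μ : σ →₀ ℕ) :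
    coeff μ (pderiv v w) = (μ v + 1) * coeff (μ + Finsupp.single v 1) w := by
  induction w using MvPolynomial.induction_on' with
  | add p q hp hq => simp [coeff_add, hp, hq, mul_add]
  | monomial d a =>
    rw [pderiv_monomial, coeff_monomial, coeff_monomial]
    by_cases h : d = μ + Finsupp.single v 1
    · subst h
      have h2 : μ + Finsupp.single v 1 - Finsupp.single v 1 = μ := by
        ext x
        simp only [Finsupp.coe_tsub, Pi.sub_apply, Finsupp.add_apply, Finsupp.single_apply]
        split_ifs <;> omega
      rw [if_pos h2, if_pos rfl]
      simp only [Finsupp.add_apply, Finsupp.single_apply, eq_self_iff_true, if_true]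
      push_cast
      ring
    · rw [if_neg h]
      by_cases h3 : d - Finsupp.single v 1 = μ
      · rw [if_pos h3]
        have hdv : d v ≠ 0 → d = μ + Finsupp.single v 1 := by
          intro hv; ext x
          have hx := congrArg (fun f => f x) h3
          simp only [Finsupp.coe_tsub, Pi.sub_apply, Finsupp.single_apply,
            Finsupp.add_apply] at hx ⊢
          rcases eq_or_ne v x with rfl | hne
          · simp only [eq_self_iff_true, if_true] at hx ⊢; omega
          · simp only [if_neg hne] at hx ⊢; omega
        by_cases hdv0 : d v = 0
        · simp [hdv0]
        · exact absurd (hdv hdv0) h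
      · rw [if_neg h3]; ring

variable {n : ℕ}

lemma prod_X_eq {σ' : Type*} [DecidableEq σ'] (s : Finset (Fin n)) (g : Fin n → σ') :
    (∏ k ∈ s, (X (g k) : MvPolynomial σ' ℝ)) = monomial (∑ k ∈ s, Finsupp.single (g k) 1) 1 := by
  induction s using Finset.cons_induction with
  | empty => simp
  | cons k s hk ih =>
    rw [Finset.prod_cons, Finset.sum_cons, ih, X, monomial_mul, one_mul]

noncomputable def mR (τ σ : Finset (Fin n)) : Fin n × Bool →₀ ℕ :=
  (∑ k ∈ σ, Finsupp.single ((k, true) : Fin n × Bool) 1) +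
    ∑ k ∈ τ \ σ, Finsupp.single ((k, false) : Fin n × Bool) 1

lemma mR_apply_true (τ σ : Finset (Fin n)) (j : Fin n) :
    mR τ σ (j, true) = if j ∈ σ then 1 else 0 := by
  simp [mR, Finsupp.finset_sum_apply, Finsupp.single_apply, Prod.ext_iff, Finset.sum_ite_eq']

lemma mR_apply_false (τ σ : Finset (Fin n)) (j : Fin n) :
    mR τ σ (j, false) = if j ∈ τ \ σ then 1 else 0 := by
  simp [mR, Finsupp.finset_sum_apply, Finsupp.single_apply, Prod.ext_iff, Finset.sum_ite_eq']

lemma expandProd (τ : Finset (Fin n)) :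
    (∏ k ∈ τ, (X (k, true) + X (k, false) : MvPolynomial (Fin n × Bool) ℝ))
      = ∑ σ ∈ τ.powerset, monomial (mR τ σ) 1 := by
  rw [Finset.prod_add]
  refine Finset.sum_congr rfl fun σ hσ => ?_
  rw [prod_X_eq, prod_X_eq, monomial_mul, one_mul, mR]

lemma mR_inj {τ σ τ' σ' : Finset (Fin n)} (h1 : σ ⊆ τ) (h1' : σ' ⊆ τ')
    (h : mR τ σ = mR τ' σ') : τ = τ' ∧ σ = σ' := by
  have hs : σ = σ' := by
    ext j
    have := congrArg (fun f => f (j, true)) h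
    simp only [mR_apply_true] at this
    by_cases h1 : j ∈ σ <;> by_cases h2 : j ∈ σ' <;> simp_all
  subst hs
  have hd : τ \ σ = τ' \ σ := by
    ext j
    have h5 := congrArg (fun f => f (j, false)) h
    simp only [mR_apply_false] at h5
    constructor <;> intro hj
    · by_contra hb
      rw [if_pos hj, if_neg hb] at h5
      exact one_ne_zero h5
    · by_contra hb
      rw [if_neg hb, if_pos hj] at h5
      exact one_ne_zero h5.symm
  constructor
  · rw [← Finset.union_sdiff_of_subset h1, ← Finset.union_sdiff_of_subset h1', hd]
  · rfl

end Stmt1Aux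

namespace Stmt1Aux
variable {n : ℕ}

lemma coeff_chain (w : MvPolynomial (Fin n × Bool) ℝ)
    (hA : ∀ (k : Fin n) (ν : Fin n × Bool →₀ ℕ), ν (k, true) = 0 → ν (k, false) = 0 →
      coeff (ν + Finsupp.single ((k, true) : Fin n × Bool) 1) w
        = coeff (ν + Finsupp.single ((k, false) : Fin n × Bool) 1) w) :
    ∀ (j : ℕ) (τ σ : Finset (Fin n)), σ ⊆ τ → (τ \ σ).card = j →
      coeff (mR τ σ) w = coeff (mR τ τ) w := by
  intro j
  induction j with
  | zero =>
    intro τ σ hσ hc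
    have h0 : τ \ σ = ∅ := Finset.card_eq_zero.mp hc
    have : σ = τ :=
      Finset.Subset.antisymm hσ (by rwa [Finset.sdiff_eq_empty_iff_subset] at h0)
    rw [this]
  | succ j ih =>
    intro τ σ hσ hc
    obtain ⟨k, hk⟩ : (τ \ σ).Nonempty := Finset.card_pos.mp (by omega)
    have hkτ : k ∈ τ := (Finset.mem_sdiff.mp hk).1
    have hkσ : k ∉ σ := (Finset.mem_sdiff.mp hk).2
    set ν := mR (τ.erase k) σ with hν
    have hνt : ν (k, true) = 0 := by rw [hν, mR_apply_true, if_neg hkσ]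
    have hνf : ν (k, false) = 0 := by
      rw [hν, mR_apply_false, if_neg]
      simp
    have hes : (τ.erase k) \ σ = (τ \ σ).erase k := Finset.erase_sdiff_comm τ σ k
    have e1 : mR τ σ = ν + Finsupp.single ((k, false) : Fin n × Bool) 1 := by
      rw [hν, mR, mR, hes, ← Finset.add_sum_erase _ _ hk]
      abel
    have e2 : mR τ (insert k σ) = ν + Finsupp.single ((k, true) : Fin n × Bool) 1 := by
      rw [hν, mR, mR, hes, Finset.sdiff_insert, Finset.sum_insert hkσ]
      abel
    have hsub : insert k σ ⊆ τ := Finset.insert_subset hkτ hσ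
    have hcard : (τ \ insert k σ).card = j := by
      rw [Finset.sdiff_insert, Finset.card_erase_of_mem hk, hc]
      omega
    calc coeff (mR τ σ) w = coeff (ν + Finsupp.single ((k, false) : Fin n × Bool) 1) w := by
          rw [e1]
      _ = coeff (ν + Finsupp.single ((k, true) : Fin n × Bool) 1) w := (hA k ν hνt hνf).symm
      _ = coeff (mR τ (insert k σ)) w := by rw [e2]
      _ = coeff (mR τ τ) w := ih τ (insert k σ) hsub hcard

end Stmt1Aux

open Stmt1Aux in
/-- a homogeneous squarefree symmetric polynomial of degree `i`,
all of whose partial derivatives are symmetric, is a linear combination of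
products `∏_{k ∈ τ} (x_k + x_{-k})` over `i`-element subsets `τ ⊆ [n]`. -/
theorem stmt_1 (n i : ℕ) (w : MvPolynomial (Fin n × Bool) ℝ)
    (hhom : w.IsHomogeneous i)
    (hsf : ∀ m ∈ w.support, ∀ v, m v ≤ 1)
    (hsym : rename (fun v : Fin n × Bool => (v.1, !v.2)) w = w)
    (hdsym : ∀ v : Fin n × Bool,
      rename (fun u : Fin n × Bool => (u.1, !u.2)) (pderiv v w) = pderiv v w) :
    ∃ c : Finset (Fin n) → ℝ,
      w = ∑ τ ∈ (Finset.univ : Finset (Fin n)).powersetCard i,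
        c τ • ∏ k ∈ τ, (X (k, true) + X (k, false)) := by
  classical
  set fl : Fin n × Bool → Fin n × Bool := fun v => (v.1, !v.2) with hfl
  have fl_inj : Function.Injective fl := by
    intro a b h
    have h1 := congrArg Prod.fst h
    have h2 := congrArg Prod.snd h
    simp only [hfl] at h1 h2
    exact Prod.ext h1 (Bool.not_inj h2)
  have fl_app : ∀ (k : Fin n) (b : Bool), fl (k, b) = (k, !b) := fun _ _ => rfl
  -- coefficient symmetry
  have hsymc : ∀ ξ : Fin n × Bool →₀ ℕ, coeff (Finsupp.mapDomain fl ξ) w = coeff ξ w := by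
    intro ξ
    conv_lhs => rw [← hsym]
    exact coeff_rename_mapDomain fl fl_inj w ξ
  -- squarefree: coefficients vanish on non-multilinear monomials
  have hsq : ∀ (ξ : Fin n × Bool →₀ ℕ) (v), 2 ≤ ξ v → coeff ξ w = 0 := by
    intro ξ v hv
    by_contra h
    have := hsf ξ (mem_support_iff.mpr h) v
    omega
  -- derivative symmetry identity
  have hD : ∀ (k : Fin n) (ν : Fin n × Bool →₀ ℕ),
      ((ν (k, false) : ℝ) + 1) *
          coeff (Finsupp.mapDomain fl ν + Finsupp.single ((k, true) : Fin n × Bool) 1) w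
        = ((ν (k, true) : ℝ) + 1) *
          coeff (ν + Finsupp.single ((k, true) : Fin n × Bool) 1) w := by
    intro k ν
    have h1 : coeff (Finsupp.mapDomain fl ν) (pderiv (k, true) w)
        = coeff ν (pderiv (k, true) w) := by
      conv_lhs => rw [← hdsym (k, true)]
      exact coeff_rename_mapDomain fl fl_inj _ ν
    rw [coeff_pderiv', coeff_pderiv'] at h1
    have h2 : (Finsupp.mapDomain fl ν) (k, true) = ν (k, false) := by
      have : ((k, true) : Fin n × Bool) = fl (k, false) := rfl
      rw [this, Finsupp.mapDomain_apply fl_inj]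
    rw [h2] at h1
    exact_mod_cast h1
  -- Lemma A
  have hA : ∀ (k : Fin n) (ν : Fin n × Bool →₀ ℕ), ν (k, true) = 0 → ν (k, false) = 0 →
      coeff (ν + Finsupp.single ((k, true) : Fin n × Bool) 1) w
        = coeff (ν + Finsupp.single ((k, false) : Fin n × Bool) 1) w := by
    intro k ν hνt hνf
    have h1 := hD k ν
    rw [hνt, hνf] at h1
    simp only [Nat.cast_zero, zero_add, one_mul] at h1
    have h2 : Finsupp.mapDomain fl ν + Finsupp.single ((k, true) : Fin n × Bool) 1
        = Finsupp.mapDomain fl (ν + Finsupp.single ((k, false) : Fin n × Bool) 1) := by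
      rw [Finsupp.mapDomain_add, Finsupp.mapDomain_single]
      simp [hfl]
    rw [h2, hsymc] at h1
    exact h1.symm
  -- Lemma B : no monomial with both signs
  have hB : ∀ μ : Fin n × Bool →₀ ℕ, coeff μ w ≠ 0 →
      ∀ k, ¬(1 ≤ μ (k, true) ∧ 1 ≤ μ (k, false)) := by
    intro μ hμ k ⟨hkt, hkf⟩
    have hμs := mem_support_iff.mpr hμ
    have h1 : μ (k, true) = 1 := le_antisymm (hsf μ hμs _) hkt
    have h2 : μ (k, false) = 1 := le_antisymm (hsf μ hμs _) hkf
    set ν := μ - Finsupp.single ((k, true) : Fin n × Bool) 1 with hν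
    have hνμ : ν + Finsupp.single ((k, true) : Fin n × Bool) 1 = μ := by
      ext x
      simp only [hν, Finsupp.add_apply, Finsupp.coe_tsub, Pi.sub_apply, Finsupp.single_apply]
      rcases eq_or_ne ((k, true) : Fin n × Bool) x with rfl | hne
      · simp only [eq_self_iff_true, if_true]; omega
      · simp [hne]
    have hνf : ν (k, false) = 1 := by
      simp [hν, Finsupp.tsub_apply, Finsupp.single_apply, h2]
    have hνt : ν (k, true) = 0 := by
      simp [hν, Finsupp.tsub_apply, Finsupp.single_apply, h1]
    have h3 := hD k ν
    rw [hνμ, hνt, hνf] at h3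
    have h4 : ((Finsupp.mapDomain fl ν + Finsupp.single ((k, true) : Fin n × Bool) 1 :
        Fin n × Bool →₀ ℕ)) (k, true) = 2 := by
      have h5 : (Finsupp.mapDomain fl ν) (k, true) = ν (k, false) := by
        have : ((k, true) : Fin n × Bool) = fl (k, false) := rfl
        rw [this, Finsupp.mapDomain_apply fl_inj]
      simp [Finsupp.add_apply, h5, hνf, Finsupp.single_apply]
    rw [hsq _ _ (le_of_eq h4.symm)] at h3
    simp only [Nat.cast_one, Nat.cast_zero, zero_add, one_mul, mul_zero] at h3
    exact hμ h3.symm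
  refine ⟨fun τ => coeff (mR τ τ) w, ?_⟩
  refine MvPolynomial.ext _ _ fun μ => ?_
  rw [coeff_sum]
  simp only [coeff_smul, expandProd, coeff_sum, coeff_monomial, smul_eq_mul]
  by_cases hP : ∃ τ σ : Finset (Fin n), σ ⊆ τ ∧ τ.card = i ∧ mR τ σ = μ
  · obtain ⟨τ0, σ0, hσ0, hc0, hm0⟩ := hP
    have hLHS : coeff μ w = coeff (mR τ0 τ0) w := by
      rw [← hm0]
      exact coeff_chain w hA (τ0 \ σ0).card τ0 σ0 hσ0 rfl
    rw [hLHS]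
    rw [Finset.sum_eq_single_of_mem τ0 (Finset.mem_powersetCard_univ.mpr hc0)]
    · rw [Finset.sum_eq_single_of_mem σ0 (Finset.mem_powerset.mpr hσ0)]
      · rw [if_pos hm0, mul_one]
      · intro b hb hbne
        rw [if_neg]
        intro hcon
        exact hbne (mR_inj (Finset.mem_powerset.mp hb) hσ0 (hcon.trans hm0.symm)).2
    · intro τ hτ hτne
      rw [Finset.sum_eq_zero, mul_zero]
      intro σ hσ
      rw [if_neg]
      intro hcon
      exact hτne (mR_inj (Finset.mem_powerset.mp hσ) hσ0 (hcon.trans hm0.symm)).1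
  · have hRHS : ∑ τ ∈ (Finset.univ : Finset (Fin n)).powersetCard i,
        (coeff (mR τ τ) w * ∑ σ ∈ τ.powerset, if mR τ σ = μ then (1:ℝ) else 0) = 0 := by
      refine Finset.sum_eq_zero fun τ hτ => ?_
      rw [Finset.sum_eq_zero, mul_zero]
      intro σ hσ
      rw [if_neg]
      intro hcon
      exact hP ⟨τ, σ, Finset.mem_powerset.mp hσ, Finset.mem_powersetCard_univ.mp hτ, hcon⟩
    rw [hRHS]
    by_contra h0
    have hμs := mem_support_iff.mpr h0
    set σA : Finset (Fin n) := Finset.univ.filter (fun k => μ (k, true) = 1) with hσA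
    set τA : Finset (Fin n) :=
      σA ∪ Finset.univ.filter (fun k => μ (k, false) = 1) with hτA
    have hmemτ : ∀ k, k ∈ τA ↔ μ (k, true) = 1 ∨ μ (k, false) = 1 := by
      intro k
      simp [hτA, hσA]
    have hmemσ : ∀ k, k ∈ σA ↔ μ (k, true) = 1 := by
      intro k; simp [hσA]
    have hστ : σA ⊆ τA := Finset.subset_union_left
    have hmm : mR τA σA = μ := by
      ext x
      obtain ⟨j, b⟩ := x
      have ht := hsf μ hμs (j, true)
      have hf := hsf μ hμs (j, false)
      have hnd := hB μ h0 j
      cases b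
      · rw [mR_apply_false]
        by_cases hj : j ∈ τA \ σA
        · rw [if_pos hj]
          have h1 := (Finset.mem_sdiff.mp hj).1
          have h2 := (Finset.mem_sdiff.mp hj).2
          rw [hmemτ] at h1
          rw [hmemσ] at h2
          omega
        · rw [if_neg hj]
          rw [Finset.mem_sdiff, hmemτ, hmemσ] at hj
          omega
      · rw [mR_apply_true]
        by_cases hj : j ∈ σA
        · rw [if_pos hj, (hmemσ j).mp hj]
        · rw [if_neg hj]
          rw [hmemσ] at hj
          omega
    have hdeg : Finsupp.degree μ = i := by
      rw [Finsupp.degree_eq_weight_one]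
      exact hhom h0
    have hcard : τA.card = i := by
      have h1 : Finsupp.degree μ = ∑ v : Fin n × Bool, μ v :=
        Finset.sum_subset (Finset.subset_univ _)
          (fun x _ hx => Finsupp.notMem_support_iff.mp hx)
      have h2 : ∑ v : Fin n × Bool, μ v = ∑ k : Fin n, (μ (k, true) + μ (k, false)) := by
        rw [Fintype.sum_prod_type]
        exact Finset.sum_congr rfl fun k _ => by
          rw [Fintype.sum_bool]
      have h3 : ∀ k : Fin n, μ (k, true) + μ (k, false) = if k ∈ τA then 1 else 0 := by
        intro k
        have ht := hsf μ hμs (k, true)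
        have hf := hsf μ hμs (k, false)
        have hnd := hB μ h0 k
        by_cases hk : k ∈ τA
        · rw [if_pos hk]; rw [hmemτ] at hk; omega
        · rw [if_neg hk]; rw [hmemτ] at hk; omega
      have h4 : ∑ k : Fin n, (μ (k, true) + μ (k, false)) = τA.card := by
        rw [Finset.sum_congr rfl fun k _ => h3 k, Finset.sum_ite_mem, Finset.univ_inter,
          Finset.card_eq_sum_ones]
      rw [← hdeg, h1, h2, h4]
    exact hP ⟨τA, σA, hστ, hcard, hmm⟩
end

section
/- Let i ≥ 1 and let w be a homogeneous squarefree polynomial of degree i+1 in R[x_1, x_{-1}, ..., x_n, x_{-n}] such that for every variable x_v, the partial derivative ∂w/∂x_v is a polynomial in the variables y_k = x_k + x_{-k}. Then w itself is symmetric under the involution swapping x_k and x_{-k}, and hence w is a squarefree polynomial in y_1, ..., y_n, expressible as a linear combination of products ∏_{k∈σ}(x_k + x_{-k}) over (i+1)-element subsets σ ⊆ {1,...,n}. -/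
open MvPolynomial

lemma coeffPD {σ : Type*} [DecidableEq σ] (v : σ) (p : MvPolynomial σ ℝ) (m : σ →₀ ℕ) :
    coeff m (pderiv v p) = ((m v : ℝ) + 1) * coeff (m + Finsupp.single v 1) p := by
  induction p using MvPolynomial.induction_on' with
  | add p q hp hq => simp [map_add, coeff_add, hp, hq, mul_add]
  | monomial s a =>
    rw [pderiv_monomial]
    simp only [coeff_monomial]
    by_cases h : s = m + Finsupp.single v 1
    · have hv : s v = m v + 1 := by simp [h, Finsupp.single_apply]
      have h2 : s - Finsupp.single v 1 = m := by
        ext j; by_cases hj : j = v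
        · subst hj; simp [hv, Finsupp.single_apply]
        · simp [Finsupp.single_apply, hj, h]
      simp [h2, h, hv]; ring
    · rw [if_neg h, mul_zero]
      by_cases h2 : s - Finsupp.single v 1 = m
      · rw [if_pos h2]
        have hv : s v = 0 := by
          by_contra hv
          apply h
          ext j; by_cases hj : j = v
          · subst hj
            have := congrArg (fun f => f j) h2
            simp [Finsupp.single_apply] at this ⊢
            omega
          · have := congrArg (fun f => f j) h2
            simp [Finsupp.single_apply, Ne.symm hj] at this ⊢
            omega
        simp [hv]
      · rw [if_neg h2]

lemma pdComm {σ : Type*} [DecidableEq σ] (u v : σ) (p : MvPolynomial σ ℝ) :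
    pderiv u (pderiv v p) = pderiv v (pderiv u p) := by
  ext m
  rw [coeffPD, coeffPD, coeffPD, coeffPD, add_right_comm]
  simp only [Finsupp.add_apply, Finsupp.single_apply]
  by_cases h : u = v
  · subst h; ring
  · rw [if_neg h, if_neg (Ne.symm h)]; push_cast; ring

lemma pdAevalY {n : ℕ} (k : Fin n) (b : Bool) (P : MvPolynomial (Fin n) ℝ) :
    pderiv (k, b) (aeval (fun j : Fin n => (X (j, true) + X (j, false) : MvPolynomial (Fin n × Bool) ℝ)) P)
      = aeval (fun j : Fin n => (X (j, true) + X (j, false) : MvPolynomial (Fin n × Bool) ℝ)) (pderiv k P) := by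
  induction P using MvPolynomial.induction_on with
  | C a => simp
  | add p q hp hq => simp only [map_add, hp, hq]
  | mul_X p j hp =>
    simp only [map_mul, aeval_X, pderiv_mul, hp, map_add, pderiv_X, Pi.single_apply]
    by_cases hj : k = j
    · subst hj; cases b <;> simp [Prod.ext_iff]
    · simp [Prod.ext_iff, Ne.symm hj]

lemma pdEq (n i : ℕ) (hi : 1 ≤ i) (w : MvPolynomial (Fin n × Bool) ℝ)
    (hhom : w.IsHomogeneous (i + 1))
    (hd : ∀ v : Fin n × Bool, ∃ P : MvPolynomial (Fin n) ℝ,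
      pderiv v w =
        aeval (fun k : Fin n => (X (k, true) + X (k, false) : MvPolynomial (Fin n × Bool) ℝ)) P)
    (k : Fin n) : pderiv (k, true) w = pderiv (k, false) w := by
  have hd2 : ∀ v, pderiv (k, true) (pderiv v w) = pderiv (k, false) (pderiv v w) := by
    intro v
    obtain ⟨P, hP⟩ := hd v
    rw [hP, pdAevalY, pdAevalY]
  have hg : ∀ v, pderiv v (pderiv (k, true) w - pderiv (k, false) w) = 0 := by
    intro v
    rw [map_sub, pdComm v (k, true), pdComm v (k, false), hd2, sub_self]
  have hzero : pderiv (k, true) w - pderiv (k, false) w = 0 := by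
    ext m
    rw [coeff_zero]
    by_cases hm : m = 0
    · subst hm
      rw [coeff_sub, coeffPD, coeffPD]
      rw [hhom.coeff_eq_zero, hhom.coeff_eq_zero] <;>
        simp [Finsupp.degree_apply, Finsupp.support_single_ne_zero] <;> omega
    · obtain ⟨v, hv⟩ : ∃ v, m v ≠ 0 := by
        by_contra hc
        push_neg at hc
        exact hm (Finsupp.ext hc)
      have h0 := hg v
      have h1 : coeff (m - Finsupp.single v 1) (pderiv v (pderiv (k, true) w - pderiv (k, false) w)) = 0 := by
        rw [h0, coeff_zero]
      rw [coeffPD] at h1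
      have h2 : m - Finsupp.single v 1 + Finsupp.single v 1 = m :=
        tsub_add_cancel_of_le (Finsupp.single_le_iff.mpr (Nat.one_le_iff_ne_zero.mpr hv))
      rw [h2] at h1
      have h3 : (((m - Finsupp.single v 1 : (Fin n × Bool) →₀ ℕ) v : ℕ) : ℝ) + 1 ≠ 0 := by
        positivity
      exact (mul_eq_zero.mp h1).resolve_left h3
  exact sub_eq_zero.mp hzero

noncomputable def mu {n : ℕ} (σ : Finset (Fin n)) (f : Fin n → Bool) : (Fin n × Bool) →₀ ℕ :=
  ∑ k ∈ σ, Finsupp.single (k, f k) 1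

lemma mu_apply {n : ℕ} (σ : Finset (Fin n)) (f : Fin n → Bool) (j : Fin n) (t : Bool) :
    mu σ f (j, t) = if j ∈ σ ∧ f j = t then 1 else 0 := by
  classical
  rw [mu, Finsupp.finset_sum_apply]
  have h1 : ∀ k ∈ σ, (Finsupp.single (k, f k) 1 : (Fin n × Bool) →₀ ℕ) (j, t)
      = if k = j then (if f j = t then (1:ℕ) else 0) else 0 := by
    intro k _
    rw [Finsupp.single_apply]
    by_cases hk : k = j
    · subst hk; simp
    · simp [Prod.ext_iff, hk]
  rw [Finset.sum_congr rfl h1, Finset.sum_ite_eq' σ j]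
  split_ifs with h1 h2 h3 <;> simp_all

section
variable {n i : ℕ} (w : MvPolynomial (Fin n × Bool) ℝ)

lemma coeffId (hpd : ∀ k : Fin n, pderiv (k, true) w = pderiv (k, false) w)
    (b : (Fin n × Bool) →₀ ℕ) (k : Fin n) :
    ((b (k, true) : ℝ) + 1) * coeff (b + Finsupp.single (k, true) 1) w
      = ((b (k, false) : ℝ) + 1) * coeff (b + Finsupp.single (k, false) 1) w := by
  rw [← coeffPD, ← coeffPD, hpd]

lemma flip1 (hpd : ∀ k : Fin n, pderiv (k, true) w = pderiv (k, false) w)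
    (b : (Fin n × Bool) →₀ ℕ) (k : Fin n) (hbT : b (k, true) = 0) (hbF : b (k, false) = 0)
    (t t' : Bool) :
    coeff (b + Finsupp.single (k, t) 1) w = coeff (b + Finsupp.single (k, t') 1) w := by
  have h := coeffId w hpd b k
  rw [hbT, hbF] at h
  simp only [Nat.cast_zero, zero_add, one_mul] at h
  cases t <;> cases t' <;> simp [h]

lemma flipMu (hpd : ∀ k : Fin n, pderiv (k, true) w = pderiv (k, false) w)
    (σ : Finset (Fin n)) :
    ∀ (b : (Fin n × Bool) →₀ ℕ), (∀ k ∈ σ, b (k, true) = 0 ∧ b (k, false) = 0) →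
    ∀ (f g : Fin n → Bool), coeff (b + mu σ f) w = coeff (b + mu σ g) w := by
  classical
  induction σ using Finset.induction_on with
  | empty => intro b _ f g; simp [mu]
  | insert a σ' ha ih =>
    intro b hb f g
    have hmu : ∀ h : Fin n → Bool, mu (insert a σ') h = Finsupp.single (a, h a) 1 + mu σ' h := by
      intro h; rw [mu, mu, Finset.sum_insert ha]
    have hbσ : ∀ k ∈ σ', b (k, true) = 0 ∧ b (k, false) = 0 := by
      intro k hk; exact hb k (Finset.mem_insert_of_mem hk)
    have hmuz : ∀ (h : Fin n → Bool) (t : Bool), mu σ' h (a, t) = 0 := by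
      intro h t; rw [mu_apply]; simp [fun h' : a ∈ σ' => ha h']
    have e1 : b + mu (insert a σ') f = (b + mu σ' f) + Finsupp.single (a, f a) 1 := by
      rw [hmu]; abel
    have e3 : (b + Finsupp.single (a, g a) 1) + mu σ' g = b + mu (insert a σ') g := by
      rw [hmu]; abel
    have hb1 : (b + mu σ' f) (a, true) = 0 := by
      rw [Finsupp.add_apply, (hb a (Finset.mem_insert_self a σ')).1, hmuz]
    have hb2 : (b + mu σ' f) (a, false) = 0 := by
      rw [Finsupp.add_apply, (hb a (Finset.mem_insert_self a σ')).2, hmuz]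
    have hb3 : ∀ k ∈ σ', (b + Finsupp.single (a, g a) 1 : (Fin n × Bool) →₀ ℕ) (k, true) = 0 ∧
        (b + Finsupp.single (a, g a) 1 : (Fin n × Bool) →₀ ℕ) (k, false) = 0 := by
      intro k hk
      have hka : (a : Fin n) ≠ k := fun h => ha (h ▸ hk)
      constructor <;>
        rw [Finsupp.add_apply, Finsupp.single_apply, if_neg (by simp [Prod.ext_iff, hka])] <;>
        simp [hbσ k hk]
    have e2 : (b + mu σ' f) + Finsupp.single (a, g a) 1 = (b + Finsupp.single (a, g a) 1) + mu σ' f := by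
      abel
    rw [e1, flip1 w hpd _ a hb1 hb2 (f a) (g a), e2, ih _ hb3 f g, e3]
end

lemma coeffProd {n : ℕ} (σ : Finset (Fin n)) (m : (Fin n × Bool) →₀ ℕ) :
    coeff m (∏ k ∈ σ, (X (k, true) + X (k, false) : MvPolynomial (Fin n × Bool) ℝ))
      = if (∀ k : Fin n, m (k, true) + m (k, false) = if k ∈ σ then 1 else 0) then 1 else 0 := by
  classical
  induction σ using Finset.induction_on generalizing m with
  | empty =>
    rw [Finset.prod_empty, coeff_one]
    by_cases hm : m = 0
    · subst hm; simp
    · rw [if_neg (fun h => hm h.symm), if_neg]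
      intro h
      apply hm
      ext v
      obtain ⟨k, t⟩ := v
      have := h k
      simp only [Finset.notMem_empty, if_false] at this
      cases t <;> simp <;> omega
  | insert a σ' ha ih =>
    rw [Finset.prod_insert ha]
    have hexp : (X (a, true) + X (a, false)) * (∏ k ∈ σ', (X (k, true) + X (k, false) : MvPolynomial (Fin n × Bool) ℝ))
        = (∏ k ∈ σ', (X (k, true) + X (k, false) : MvPolynomial (Fin n × Bool) ℝ)) * X (a, true)
          + (∏ k ∈ σ', (X (k, true) + X (k, false) : MvPolynomial (Fin n × Bool) ℝ)) * X (a, false) := by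
      ring
    rw [hexp, coeff_add, coeff_mul_X', coeff_mul_X']
    have hsub : ∀ (t : Bool) (k : Fin n) (t' : Bool),
        (m - Finsupp.single (a, t) 1 : (Fin n × Bool) →₀ ℕ) (k, t')
          = m (k, t') - (if (a, t) = (k, t') then 1 else 0) := by
      intro t k t'
      rw [Finsupp.tsub_apply, Finsupp.single_apply]
    by_cases hT : m (a, true) = 0 <;> by_cases hF : m (a, false) = 0
    · -- both zero
      rw [if_neg (Finsupp.notMem_support_iff.mpr hT), if_neg (Finsupp.notMem_support_iff.mpr hF),
        if_neg (show ¬∀ k : Fin n, m (k, true) + m (k, false) = if k ∈ insert a σ' then 1 else 0 by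
          intro h
          have := h a
          rw [if_pos (Finset.mem_insert_self a σ')] at this
          omega), add_zero]
    · -- true zero, false nonzero
      rw [if_neg (Finsupp.notMem_support_iff.mpr hT), zero_add,
        if_pos (Finsupp.mem_support_iff.mpr hF), ih]
      congr 1
      apply propext
      constructor
      · intro h k
        have := h k
        rw [hsub, hsub] at this
        by_cases hk : k = a
        · subst hk
          simp only [Prod.mk.injEq, and_true, and_false, if_true, if_false] at this
          rw [if_neg ha] at this
          rw [if_pos (Finset.mem_insert_self k σ')]
          omega
        · have hne : ¬((a, false) = (k, true)) := by simp [hk, Ne.symm hk]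
          simp only [Prod.mk.injEq] at this
          rw [if_neg (by simp [Ne.symm hk]), if_neg (by simp [Ne.symm hk])] at this
          simp only [Finset.mem_insert, hk, false_or]
          by_cases hkσ : k ∈ σ'
          · rw [if_pos hkσ] at this ⊢; omega
          · rw [if_neg hkσ] at this ⊢; omega
      · intro h k
        have := h k
        rw [hsub, hsub]
        by_cases hk : k = a
        · subst hk
          rw [if_pos (Finset.mem_insert_self k σ')] at this
          simp only [Prod.mk.injEq, and_true, and_false, if_true, if_false]
          rw [if_neg ha]
          omega
        · simp only [Prod.mk.injEq]
          rw [if_neg (by simp [Ne.symm hk]), if_neg (by simp [Ne.symm hk])]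
          simp only [Finset.mem_insert, hk, false_or] at this
          by_cases hkσ : k ∈ σ'
          · rw [if_pos hkσ] at this ⊢; omega
          · rw [if_neg hkσ] at this ⊢; omega
    · -- true nonzero, false zero
      rw [if_neg (Finsupp.notMem_support_iff.mpr hF), add_zero,
        if_pos (Finsupp.mem_support_iff.mpr hT), ih]
      congr 1
      apply propext
      constructor
      · intro h k
        have := h k
        rw [hsub, hsub] at this
        by_cases hk : k = a
        · subst hk
          simp only [Prod.mk.injEq, and_true, and_false, if_true, if_false] at this
          rw [if_neg ha] at this
          rw [if_pos (Finset.mem_insert_self k σ')]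
          omega
        · simp only [Prod.mk.injEq] at this
          rw [if_neg (by simp [Ne.symm hk]), if_neg (by simp [Ne.symm hk])] at this
          simp only [Finset.mem_insert, hk, false_or]
          by_cases hkσ : k ∈ σ'
          · rw [if_pos hkσ] at this ⊢; omega
          · rw [if_neg hkσ] at this ⊢; omega
      · intro h k
        have := h k
        rw [hsub, hsub]
        by_cases hk : k = a
        · subst hk
          rw [if_pos (Finset.mem_insert_self k σ')] at this
          simp only [Prod.mk.injEq, and_true, and_false, if_true, if_false]
          rw [if_neg ha]
          omega
        · simp only [Prod.mk.injEq]
          rw [if_neg (by simp [Ne.symm hk]), if_neg (by simp [Ne.symm hk])]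
          simp only [Finset.mem_insert, hk, false_or] at this
          by_cases hkσ : k ∈ σ'
          · rw [if_pos hkσ] at this ⊢; omega
          · rw [if_neg hkσ] at this ⊢; omega
    · -- both nonzero
      rw [if_pos (Finsupp.mem_support_iff.mpr hT),
        if_pos (Finsupp.mem_support_iff.mpr hF), ih, ih]
      rw [if_neg (show ¬∀ k : Fin n, (m - Finsupp.single (a, true) 1 : (Fin n × Bool) →₀ ℕ) (k, true)
            + (m - Finsupp.single (a, true) 1 : (Fin n × Bool) →₀ ℕ) (k, false) = if k ∈ σ' then 1 else 0 by
          intro h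
          have := h a
          rw [hsub, hsub, if_neg ha] at this
          simp [Prod.ext_iff] at this
          omega),
        if_neg (show ¬∀ k : Fin n, (m - Finsupp.single (a, false) 1 : (Fin n × Bool) →₀ ℕ) (k, true)
            + (m - Finsupp.single (a, false) 1 : (Fin n × Bool) →₀ ℕ) (k, false) = if k ∈ σ' then 1 else 0 by
          intro h
          have := h a
          rw [hsub, hsub, if_neg ha] at this
          simp [Prod.ext_iff] at this
          omega),
        if_neg (show ¬∀ k : Fin n, m (k, true) + m (k, false) = if k ∈ insert a σ' then 1 else 0 by
          intro h
          have := h a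
          rw [if_pos (Finset.mem_insert_self a σ')] at this
          omega), add_zero]

lemma noBoth {n : ℕ} (w : MvPolynomial (Fin n × Bool) ℝ)
    (hpd : ∀ k : Fin n, pderiv (k, true) w = pderiv (k, false) w)
    (hsf : ∀ m ∈ w.support, ∀ v, m v ≤ 1) :
    ∀ m ∈ w.support, ∀ k : Fin n, ¬(m (k, true) ≠ 0 ∧ m (k, false) ≠ 0) := by
  intro m hm k hc
  obtain ⟨h1, h2⟩ := hc
  have e1 : m (k, true) = 1 := le_antisymm (hsf m hm _) (by omega)
  have e2 : m (k, false) = 1 := le_antisymm (hsf m hm _) (by omega)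
  set b : (Fin n × Bool) →₀ ℕ := m - Finsupp.single (k, true) 1 with hbdef
  have hb : b + Finsupp.single (k, true) 1 = m :=
    tsub_add_cancel_of_le (Finsupp.single_le_iff.mpr (by omega))
  have hbT : b (k, true) = 0 := by
    rw [hbdef, Finsupp.tsub_apply, Finsupp.single_apply, if_pos rfl, e1]
  have hbF : b (k, false) = 1 := by
    rw [hbdef, Finsupp.tsub_apply, Finsupp.single_apply,
      if_neg (by simp : ¬((k, true) = ((k : Fin n), false)))]
    omega
  have hid := coeffId w hpd b k
  rw [hb, hbT, hbF] at hid
  have hcf : coeff (b + Finsupp.single (k, false) 1) w = 0 := by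
    by_contra hcq
    have hmem : (b + Finsupp.single (k, false) 1) ∈ w.support := mem_support_iff.mpr hcq
    have hle := hsf _ hmem (k, false)
    rw [Finsupp.add_apply, hbF, Finsupp.single_apply, if_pos rfl] at hle
    omega
  rw [hcf] at hid
  norm_num at hid
  exact mem_support_iff.mp hm hid

lemma hrec {n : ℕ} (m : (Fin n × Bool) →₀ ℕ)
    (h1 : ∀ v, m v ≤ 1)
    (h3 : ∀ k : Fin n, ¬(m (k, true) ≠ 0 ∧ m (k, false) ≠ 0)) :
    m = mu (Finset.univ.filter fun k => m (k, true) + m (k, false) ≠ 0)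
          (fun k => decide (m (k, true) = 1)) := by
  ext v
  obtain ⟨k, t⟩ := v
  rw [mu_apply]
  have hT := h1 (k, true)
  have hF := h1 (k, false)
  have hB := h3 k
  simp only [Finset.mem_filter, Finset.mem_univ, true_and]
  cases t <;> split_ifs with h <;>
    simp only [decide_eq_true_eq, decide_eq_false_iff_not] at h <;> omega

lemma sigma_eq {n : ℕ} (m : (Fin n × Bool) →₀ ℕ) (σ : Finset (Fin n))
    (hCσ : ∀ k : Fin n, m (k, true) + m (k, false) = if k ∈ σ then 1 else 0) :
    σ = Finset.univ.filter (fun k => m (k, true) + m (k, false) ≠ 0) := by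
  ext k
  simp only [Finset.mem_filter, Finset.mem_univ, true_and]
  have := hCσ k
  by_cases hk : k ∈ σ
  · rw [if_pos hk] at this; simp [hk, this]
  · rw [if_neg hk] at this; simp [hk, this]

/-- if `w` is a homogeneous squarefree polynomial of degree `i+1`
(`i ≥ 1`) all of whose partial derivatives are polynomials in the variables
`y_k = x_k + x_{-k}`, then `w` is symmetric and is a linear combination of
products `∏_{k ∈ σ} (x_k + x_{-k})` over `(i+1)`-element subsets. -/
theorem stmt_2 (n i : ℕ) (hi : 1 ≤ i) (w : MvPolynomial (Fin n × Bool) ℝ)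
    (hhom : w.IsHomogeneous (i + 1))
    (hsf : ∀ m ∈ w.support, ∀ v, m v ≤ 1)
    (hd : ∀ v : Fin n × Bool, ∃ P : MvPolynomial (Fin n) ℝ,
      pderiv v w =
        aeval (fun k : Fin n => (X (k, true) + X (k, false) : MvPolynomial (Fin n × Bool) ℝ)) P) :
    rename (fun v : Fin n × Bool => (v.1, !v.2)) w = w ∧
    ∃ c : Finset (Fin n) → ℝ,
      w = ∑ σ ∈ (Finset.univ : Finset (Fin n)).powersetCard (i + 1),
        c σ • ∏ k ∈ σ, (X (k, true) + X (k, false)) := by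
  classical
  have hpd : ∀ k : Fin n, pderiv (k, true) w = pderiv (k, false) w :=
    fun k => pdEq n i hi w hhom hd k
  set c : Finset (Fin n) → ℝ := fun σ => coeff (mu σ (fun _ => true)) w with hcdef
  have key : w = ∑ σ ∈ (Finset.univ : Finset (Fin n)).powersetCard (i + 1),
      c σ • ∏ k ∈ σ, (X (k, true) + X (k, false)) := by
    apply MvPolynomial.ext
    intro m
    rw [coeff_sum]
    simp only [coeff_smul, coeffProd, smul_eq_mul]
    set σm : Finset (Fin n) := Finset.univ.filter (fun k => m (k, true) + m (k, false) ≠ 0)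
      with hσm
    by_cases hC : (∀ k : Fin n, m (k, true) + m (k, false) = if k ∈ σm then 1 else 0)
        ∧ σm.card = i + 1
    · rw [Finset.sum_eq_single σm]
      · rw [if_pos hC.1, mul_one]
        have hle : ∀ v, m v ≤ 1 := by
          rintro ⟨k, t⟩
          have := hC.1 k
          cases t <;> split_ifs at this <;> omega
        have hnb : ∀ k : Fin n, ¬(m (k, true) ≠ 0 ∧ m (k, false) ≠ 0) := by
          intro k hcon
          have := hC.1 k
          split_ifs at this <;> omega
        have hm := hrec m hle hnb
        rw [← hσm] at hm
        conv_lhs => rw [hm]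
        have hfl := flipMu w hpd σm 0 (by simp) (fun k => decide (m (k, true) = 1))
          (fun _ => true)
        simpa [hcdef] using hfl
      · intro σ hσ hne
        rw [if_neg, mul_zero]
        intro hCσ
        exact hne ((sigma_eq m σ hCσ).trans hσm.symm)
      · intro habs
        exact absurd (Finset.mem_powersetCard.mpr ⟨Finset.subset_univ _, hC.2⟩) habs
    · have hz : coeff m w = 0 := by
        by_contra hcz
        have hm : m ∈ w.support := mem_support_iff.mpr hcz
        have hle : ∀ v, m v ≤ 1 := hsf m hm
        have hnb := noBoth w hpd hsf m hm
        apply hC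
        have hCond : ∀ k : Fin n, m (k, true) + m (k, false) = if k ∈ σm then 1 else 0 := by
          intro k
          have h1 := hnb k
          have h2 := hle (k, true)
          have h3 := hle (k, false)
          rw [hσm]
          simp only [Finset.mem_filter, Finset.mem_univ, true_and]
          split_ifs with h <;> omega
        refine ⟨hCond, ?_⟩
        have hdeg : Finsupp.degree m = i + 1 := by
          rw [Finsupp.degree_eq_weight_one]
          exact hhom hcz
        have h2 : Finsupp.degree m = ∑ v : Fin n × Bool, m v := by
          rw [Finsupp.degree]
          exact Finset.sum_subset (Finset.subset_univ _)
            (fun v _ hv => Finsupp.notMem_support_iff.mp hv)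
        rw [h2, Fintype.sum_prod_type] at hdeg
        have h3 : ∀ k : Fin n, (∑ t : Bool, m (k, t)) = m (k, true) + m (k, false) := by
          intro k
          rw [Fintype.sum_bool]
        rw [Finset.sum_congr rfl (fun k _ => (h3 k).trans (hCond k))] at hdeg
        rw [Finset.sum_ite_mem, Finset.univ_inter, Finset.sum_const, smul_eq_mul,
          mul_one] at hdeg
        exact hdeg
      rw [hz]
      symm
      apply Finset.sum_eq_zero
      intro σ hσ
      rw [if_neg, mul_zero]
      intro hCσ
      apply hC
      have hσeq : σ = σm := (sigma_eq m σ hCσ).trans hσm.symm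
      refine ⟨hσeq ▸ hCσ, ?_⟩
      rw [← hσeq]
      exact (Finset.mem_powersetCard.mp hσ).2
  refine ⟨?_, ⟨c, key⟩⟩
  have hsym : ∀ σ : Finset (Fin n),
      rename (fun v : Fin n × Bool => (v.1, !v.2))
        (∏ k ∈ σ, (X (k, true) + X (k, false) : MvPolynomial (Fin n × Bool) ℝ))
      = ∏ k ∈ σ, (X (k, true) + X (k, false)) := by
    intro σ
    rw [map_prod]
    refine Finset.prod_congr rfl fun k _ => ?_
    rw [map_add, rename_X, rename_X]
    simp [add_comm]
  conv_lhs => rw [key]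
  rw [map_sum]
  conv_rhs => rw [key]
  refine Finset.sum_congr rfl fun σ _ => ?_
  rw [smul_eq_C_mul, map_mul, hsym σ]
  congr 1
  simp
end

section
/- Let Δ be a centrally symmetric simplicial complex with involution v ↦ −v, and let w be a symmetric stress (a polynomial with α(w) = w, every monomial supported on a face of Δ) all of whose monomials are supported on the star of a vertex v. Then every monomial of w is supported on lk(v) ∩ lk(−v), the intersection of the links of v and −v. -/
open MvPolynomial

/-- in a centrally symmetric simplicial complex `Δ`, a symmetric
polynomial `w` (every monomial supported on a face of `Δ`) that lives on the
star of a vertex `v` in fact lives on `lk(v) ∩ lk(-v)`. -/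
theorem stmt_9 (n : ℕ) (Δ : Finset (Finset (Fin n × Bool)))
    (hdown : ∀ s ∈ Δ, ∀ t ⊆ s, t ∈ Δ)
    (hmap : ∀ s ∈ Δ, s.image (fun u : Fin n × Bool => (u.1, !u.2)) ∈ Δ)
    (hfacefree : ∀ s ∈ Δ, s ≠ ∅ → s.image (fun u : Fin n × Bool => (u.1, !u.2)) ≠ s)
    (w : MvPolynomial (Fin n × Bool) ℝ)
    (hsym : rename (fun u : Fin n × Bool => (u.1, !u.2)) w = w)
    (hsupp : ∀ m ∈ w.support, m.support ∈ Δ)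
    (v : Fin n × Bool)
    (hstar : ∀ m ∈ w.support, insert v m.support ∈ Δ) :
    ∀ m ∈ w.support,
      (insert v m.support ∈ Δ ∧ v ∉ m.support) ∧
      (insert (v.1, !v.2) m.support ∈ Δ ∧ (v.1, !v.2) ∉ m.support) := by
  intro m hm
  set f : Fin n × Bool → Fin n × Bool := fun u => (u.1, !u.2) with hf
  have hfinv : ∀ u, f (f u) = u := by intro u; simp [hf]
  have hfinj : Function.Injective f := fun a b h => by
    have := congrArg f h; simpa [hfinv] using this
  have hfne : ∀ u, f u ≠ u := by
    intro u h
    have : (!u.2) = u.2 := congrArg Prod.snd h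
    simp at this
  -- the flipped monomial is also in the support
  have hm' : Finsupp.mapDomain f m ∈ w.support := by
    rw [MvPolynomial.mem_support_iff]
    have : MvPolynomial.coeff (Finsupp.mapDomain f m) (rename f w)
        = MvPolynomial.coeff m w := MvPolynomial.coeff_rename_mapDomain f hfinj w m
    rw [hsym] at this
    rw [this]
    exact (MvPolynomial.mem_support_iff).1 hm
  have hsupp' : (Finsupp.mapDomain f m).support = m.support.image f :=
    Finsupp.mapDomain_support_of_injective hfinj m
  -- insert (f v) m.support ∈ Δ
  have h1 : insert v (m.support.image f) ∈ Δ := by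
    have := hstar _ hm'
    rwa [hsupp'] at this
  have h2 : insert (f v) m.support ∈ Δ := by
    have := hmap _ h1
    rw [Finset.image_insert] at this
    have himg : (m.support.image f).image f = m.support := by
      rw [Finset.image_image]
      have : f ∘ f = id := funext hfinv
      rw [this, Finset.image_id]
    rwa [himg] at this
  -- a nonempty face fixed by f cannot exist; use the pair {v, f v}
  have hpair : ({v, f v} : Finset (Fin n × Bool)) ∉ Δ := by
    intro hin
    refine hfacefree _ hin (by simp) ?_
    rw [Finset.image_insert, Finset.image_singleton, hfinv]
    exact Finset.pair_comm (f v) v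
  have hv : v ∉ m.support := by
    intro hv
    apply hpair
    refine hdown _ h2 _ ?_
    intro x hx
    rcases Finset.mem_insert.1 hx with h | h
    · subst h; exact Finset.mem_insert_of_mem hv
    · rw [Finset.mem_singleton] at h; subst h; exact Finset.mem_insert_self _ _
  have hfv : f v ∉ m.support := by
    intro hfv
    apply hpair
    refine hdown _ (hstar _ hm) _ ?_
    intro x hx
    rcases Finset.mem_insert.1 hx with h | h
    · subst h; exact Finset.mem_insert_self _ _
    · rw [Finset.mem_singleton] at h; subst h; exact Finset.mem_insert_of_mem hfv
  exact ⟨⟨hstar _ hm, hv⟩, ⟨h2, hfv⟩⟩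
end

section
/- Let Δ be a centrally symmetric simplicial complex on V ⊆ {±1,...,±n}, and let Θ = θ_1, ..., θ_ℓ be linear forms such that θ_1, ..., θ_{ℓ−1} satisfy α(θ_k) = −θ_k and θ_ℓ either satisfies α(θ_ℓ) = −θ_ℓ or equals ∑_{v∈V} x_v. Suppose that for some integer i > 1, every i-stress on Δ with respect to Θ is symmetric (fixed by α). Then every (i+1)-stress on Δ with respect to Θ is symmetric. -/
open MvPolynomial

/-- The directional-derivative operator `∂_θ = ∑_v θ(v) ∂/∂x_v`. -/
noncomputable def Dop {V : Type*} [Fintype V] (θ : V → ℝ)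
    (w : MvPolynomial V ℝ) : MvPolynomial V ℝ :=
  ∑ v : V, θ v • pderiv v w

/-- An `i`-stress on `Δ` w.r.t. the linear forms `Θ`. -/
def IsStress (n ℓ i : ℕ) (Δ : Finset (Finset (Fin n × Bool)))
    (Θ : Fin ℓ → (Fin n × Bool) → ℝ) (w : MvPolynomial (Fin n × Bool) ℝ) : Prop :=
  w.IsHomogeneous i ∧ (∀ m ∈ w.support, m.support ∈ Δ) ∧ ∀ k : Fin ℓ, Dop (Θ k) w = 0

namespace Stmt15Aux

/-- The central symmetry involution on vertices. -/
abbrev sg (n : ℕ) : Fin n × Bool → Fin n × Bool := fun u => (u.1, !u.2)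

lemma sg_sg {n : ℕ} (v : Fin n × Bool) : sg n (sg n v) = v := by
  cases v; simp [sg]

lemma sg_invol {n : ℕ} : Function.Involutive (sg n) := fun v => sg_sg v

lemma sg_inj {n : ℕ} : Function.Injective (sg n) := sg_invol.injective

lemma sg_ne {n : ℕ} (v : Fin n × Bool) : sg n v ≠ v := by
  cases v with
  | mk a b => cases b <;> simp [sg]

lemma coeff_pderiv {σ : Type*} (v : σ) (f : MvPolynomial σ ℝ) (m : σ →₀ ℕ) :
    coeff m (pderiv v f) = ((m v : ℝ) + 1) * coeff (m + Finsupp.single v 1) f := by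
  classical
  induction f using MvPolynomial.induction_on' with
  | monomial s a =>
    rw [pderiv_monomial, coeff_monomial, coeff_monomial]
    by_cases h : s = m + Finsupp.single v 1
    · subst h
      have h1 : m + Finsupp.single v 1 - Finsupp.single v 1 = m :=
        add_tsub_cancel_right _ _
      have h2 : ((m + Finsupp.single v 1 : σ →₀ ℕ)) v = m v + 1 := by
        rw [Finsupp.add_apply, Finsupp.single_apply, if_pos rfl]
      rw [if_pos h1, if_pos rfl, h2]
      push_cast
      ring
    · rw [if_neg h]
      by_cases hsv : s v = 0
      · by_cases h1 : s - Finsupp.single v 1 = m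
        · rw [if_pos h1, hsv]; simp
        · rw [if_neg h1]; simp
      · have h1 : s - Finsupp.single v 1 ≠ m := by
          intro h1
          apply h
          ext w
          have h2 := DFunLike.congr_fun h1 w
          simp only [Finsupp.tsub_apply, Finsupp.add_apply, Finsupp.single_apply] at h2 ⊢
          by_cases hvw : v = w
          · subst hvw
            rw [if_pos rfl] at h2 ⊢
            omega
          · rw [if_neg hvw] at h2 ⊢
            omega
        rw [if_neg h1]
        simp
  | add p q hp hq =>
    rw [map_add, coeff_add, hp, hq, coeff_add]
    ring

lemma pderiv_comm' {σ : Type*} (x y : σ) (f : MvPolynomial σ ℝ) :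
    pderiv x (pderiv y f) = pderiv y (pderiv x f) := by
  classical
  apply MvPolynomial.ext
  intro m
  rw [coeff_pderiv, coeff_pderiv, coeff_pderiv, coeff_pderiv]
  by_cases h : x = y
  · subst h; ring_nf
  · have e1 : ((m + Finsupp.single x 1 : σ →₀ ℕ)) y = m y := by
      rw [Finsupp.add_apply, Finsupp.single_apply, if_neg h, add_zero]
    have e2 : ((m + Finsupp.single y 1 : σ →₀ ℕ)) x = m x := by
      rw [Finsupp.add_apply, Finsupp.single_apply,
        if_neg (fun hh : y = x => h hh.symm), add_zero]
    have e3 : m + Finsupp.single x 1 + Finsupp.single y 1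
        = m + Finsupp.single y 1 + Finsupp.single x 1 := by
      rw [add_right_comm]
    rw [e1, e2, e3]
    ring

section DopLemmas

variable {V : Type*} [Fintype V]

lemma Dop_sub (θ : V → ℝ) (f g : MvPolynomial V ℝ) :
    Dop θ (f - g) = Dop θ f - Dop θ g := by
  unfold Dop
  rw [← Finset.sum_sub_distrib]
  exact Finset.sum_congr rfl fun v _ => by rw [map_sub, smul_sub]

lemma Dop_add (θ : V → ℝ) (f g : MvPolynomial V ℝ) :
    Dop θ (f + g) = Dop θ f + Dop θ g := by
  unfold Dop
  rw [← Finset.sum_add_distrib]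
  exact Finset.sum_congr rfl fun v _ => by rw [map_add, smul_add]

lemma Dop_neg_form (θ : V → ℝ) (f : MvPolynomial V ℝ) :
    Dop (fun v => -(θ v)) f = -(Dop θ f) := by
  unfold Dop
  rw [← Finset.sum_neg_distrib]
  exact Finset.sum_congr rfl fun v _ => by rw [neg_smul]

lemma Dop_pderiv (θ : V → ℝ) (v : V) (f : MvPolynomial V ℝ) :
    pderiv v (Dop θ f) = Dop θ (pderiv v f) := by
  unfold Dop
  rw [map_sum]
  exact Finset.sum_congr rfl fun u _ => by
    rw [Derivation.map_smul, pderiv_comm' v u]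

lemma Dop_mul (θ : V → ℝ) (f g : MvPolynomial V ℝ) :
    Dop θ (f * g) = Dop θ f * g + f * Dop θ g := by
  unfold Dop
  rw [Finset.sum_mul, Finset.mul_sum, ← Finset.sum_add_distrib]
  exact Finset.sum_congr rfl fun v _ => by
    rw [pderiv_mul, smul_add, smul_mul_assoc, mul_smul_comm]

lemma Dop_X [DecidableEq V] (θ : V → ℝ) (z : V) :
    Dop θ (X z) = C (θ z) := by
  unfold Dop
  rw [Finset.sum_eq_single z]
  · rw [pderiv_X_self, smul_eq_C_mul, mul_one]
  · intro b _ hb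
    rw [pderiv_X_of_ne hb.symm, smul_zero]
  · intro h; exact absurd (Finset.mem_univ z) h

end DopLemmas

lemma rename_sg_sg {n : ℕ} (f : MvPolynomial (Fin n × Bool) ℝ) :
    rename (sg n) (rename (sg n) f) = f := by
  rw [rename_rename]
  have h : (sg n) ∘ (sg n) = id := funext fun v => sg_sg v
  rw [h, rename_id, AlgHom.id_apply]

lemma Dop_rename {n : ℕ} (θ : (Fin n × Bool) → ℝ) (f : MvPolynomial (Fin n × Bool) ℝ) :
    Dop θ (rename (sg n) f) = rename (sg n) (Dop (fun v => θ (sg n v)) f) := by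
  have h1 : ∀ v : Fin n × Bool,
      pderiv v (rename (sg n) f) = rename (sg n) (pderiv (sg n v) f) := by
    intro v
    conv_lhs => rw [← sg_sg v]
    exact pderiv_rename sg_inj (sg n v) f
  unfold Dop
  rw [map_sum]
  refine Fintype.sum_bijective (sg n) sg_invol.bijective _ _ (fun v => ?_)
  show θ v • pderiv v (rename (sg n) f)
      = rename (sg n) (θ (sg n (sg n v)) • pderiv (sg n v) f)
  rw [sg_sg, h1 v, map_smul]

lemma weight_one_single {V : Type*} (v : V) :
    (Finsupp.weight (1 : V → ℕ)) (Finsupp.single v 1) = 1 := by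
  simp [Finsupp.weight_apply, Finsupp.sum_single_index]

/-- pointwise value of a "flip" monomial at `v`. -/
lemma flip_apply_self {n : ℕ} (m : (Fin n × Bool) →₀ ℕ) (v : Fin n × Bool) :
    ((m - Finsupp.single v 1 + Finsupp.single (sg n v) 1 : (Fin n × Bool) →₀ ℕ)) v
      = m v - 1 := by
  rw [Finsupp.add_apply, Finsupp.tsub_apply, Finsupp.single_apply, Finsupp.single_apply,
    if_pos rfl, if_neg (sg_ne v), add_zero]

/-- pointwise value of a "flip" monomial at `sg n v`. -/
lemma flip_apply_sg {n : ℕ} (m : (Fin n × Bool) →₀ ℕ) (v : Fin n × Bool) :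
    ((m - Finsupp.single v 1 + Finsupp.single (sg n v) 1 : (Fin n × Bool) →₀ ℕ)) (sg n v)
      = m (sg n v) + 1 := by
  rw [Finsupp.add_apply, Finsupp.tsub_apply, Finsupp.single_apply, Finsupp.single_apply,
    if_pos rfl, if_neg (fun h : v = sg n v => sg_ne v h.symm), Nat.sub_zero]

section StressLemmas

variable {n ℓ : ℕ} {Δ : Finset (Finset (Fin n × Bool))}
  {Θ : Fin ℓ → (Fin n × Bool) → ℝ}

lemma stress_sub {j : ℕ} {f g : MvPolynomial (Fin n × Bool) ℝ}
    (h1 : IsStress n ℓ j Δ Θ f) (h2 : IsStress n ℓ j Δ Θ g) :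
    IsStress n ℓ j Δ Θ (f - g) := by
  refine ⟨h1.1.sub h2.1, ?_, fun k => by rw [Dop_sub, h1.2.2 k, h2.2.2 k, sub_zero]⟩
  intro m hm
  rw [mem_support_iff, coeff_sub] at hm
  by_cases hf : coeff m f ≠ 0
  · exact h1.2.1 m (mem_support_iff.mpr hf)
  · push_neg at hf
    have hg : coeff m g ≠ 0 := by intro hg; rw [hf, hg, sub_zero] at hm; exact hm rfl
    exact h2.2.1 m (mem_support_iff.mpr hg)

lemma stress_pderiv {j : ℕ} {f : MvPolynomial (Fin n × Bool) ℝ}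
    (hdown : ∀ s ∈ Δ, ∀ t ⊆ s, t ∈ Δ)
    (h : IsStress n ℓ (j + 1) Δ Θ f) (v : Fin n × Bool) :
    IsStress n ℓ j Δ Θ (pderiv v f) := by
  refine ⟨?_, ?_, fun k => by rw [← Dop_pderiv, h.2.2 k, map_zero]⟩
  · intro d hd
    rw [coeff_pderiv] at hd
    have hd' : coeff (d + Finsupp.single v 1) f ≠ 0 := by
      intro h0; rw [h0, mul_zero] at hd; exact hd rfl
    have hw := h.1 hd'
    rw [map_add, weight_one_single] at hw
    omega
  · intro m hm
    rw [mem_support_iff, coeff_pderiv] at hm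
    have hm' : coeff (m + Finsupp.single v 1) f ≠ 0 := by
      intro h0; rw [h0, mul_zero] at hm; exact hm rfl
    have hF := h.2.1 _ (mem_support_iff.mpr hm')
    refine hdown _ hF _ ?_
    intro x hx
    rw [Finsupp.mem_support_iff] at hx ⊢
    rw [Finsupp.add_apply]
    omega

lemma stress_rename {j : ℕ} {f : MvPolynomial (Fin n × Bool) ℝ}
    (hmap : ∀ s ∈ Δ, s.image (fun u : Fin n × Bool => (u.1, !u.2)) ∈ Δ)
    (hΘ : ∀ k : Fin ℓ, (∀ v : Fin n × Bool, Θ k (v.1, !v.2) = - Θ k v) ∨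
                       ((k : ℕ) = ℓ - 1 ∧ ∀ v : Fin n × Bool, Θ k v = 1))
    (h : IsStress n ℓ j Δ Θ f) :
    IsStress n ℓ j Δ Θ (rename (sg n) f) := by
  refine ⟨h.1.rename_isHomogeneous, ?_, ?_⟩
  · intro m hm
    rw [support_rename_of_injective sg_inj] at hm
    obtain ⟨m₀, hm₀, rfl⟩ := Finset.mem_image.mp hm
    rw [Finsupp.mapDomain_support_of_injective sg_inj]
    exact hmap _ (h.2.1 m₀ hm₀)
  · intro k
    rw [Dop_rename]
    rcases hΘ k with hk | hk
    · have he : (fun v => Θ k (sg n v)) = fun v => -(Θ k v) := funext fun v => hk v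
      rw [he, Dop_neg_form, h.2.2 k, neg_zero, map_zero]
    · have he : (fun v => Θ k (sg n v)) = Θ k := funext fun v => by rw [hk.2, hk.2]
      rw [he, h.2.2 k, map_zero]

end StressLemmas

end Stmt15Aux

open Stmt15Aux

/-- main theorem: let `Δ` be a centrally symmetric simplicial
complex and `Θ = θ_1, …, θ_ℓ` linear forms with `θ_1, …, θ_{ℓ-1}` anti-symmetric
under `α` and `θ_ℓ` either anti-symmetric or equal to `∑_v x_v`. If for some
`i > 1` every `i`-stress on `Δ` w.r.t. `Θ` is symmetric, then every
`(i+1)`-stress on `Δ` w.r.t. `Θ` is symmetric. -/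
theorem stmt_15 (n ℓ i : ℕ) (hi : 1 < i) (Δ : Finset (Finset (Fin n × Bool)))
    (hdown : ∀ s ∈ Δ, ∀ t ⊆ s, t ∈ Δ)
    (hmap : ∀ s ∈ Δ, s.image (fun u : Fin n × Bool => (u.1, !u.2)) ∈ Δ)
    (hfacefree : ∀ s ∈ Δ, s ≠ ∅ → s.image (fun u : Fin n × Bool => (u.1, !u.2)) ≠ s)
    (Θ : Fin ℓ → (Fin n × Bool) → ℝ)
    (hΘ : ∀ k : Fin ℓ, (∀ v : Fin n × Bool, Θ k (v.1, !v.2) = - Θ k v) ∨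
                       ((k : ℕ) = ℓ - 1 ∧ ∀ v : Fin n × Bool, Θ k v = 1))
    (hsym : ∀ w, IsStress n ℓ i Δ Θ w →
      rename (fun v : Fin n × Bool => (v.1, !v.2)) w = w) :
    ∀ w, IsStress n ℓ (i + 1) Δ Θ w →
      rename (fun v : Fin n × Bool => (v.1, !v.2)) w = w := by
  classical
  intro w hw
  set u : MvPolynomial (Fin n × Bool) ℝ := rename (sg n) w - w with hu_def
  suffices hu0 : u = 0 by
    exact sub_eq_zero.mp hu0
  have hu : IsStress n ℓ (i + 1) Δ Θ u :=
    stress_sub (stress_rename hmap hΘ hw) hw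
  have hren_u : rename (sg n) u = -u := by
    rw [hu_def, map_sub, rename_sg_sg, neg_sub]
  -- no face contains both a vertex and its antipode
  have hpair : ∀ F ∈ Δ, ∀ x : Fin n × Bool, x ∈ F → sg n x ∉ F := by
    intro F hF x hx hsx
    have hsub : ({x, sg n x} : Finset (Fin n × Bool)) ⊆ F := by
      intro y hy
      rcases Finset.mem_insert.mp hy with h | h
      · exact h ▸ hx
      · exact (Finset.mem_singleton.mp h) ▸ hsx
    have hΔ : ({x, sg n x} : Finset (Fin n × Bool)) ∈ Δ := hdown F hF _ hsub
    refine hfacefree _ hΔ (by simp) ?_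
    show Finset.image (sg n) {x, sg n x} = {x, sg n x}
    rw [Finset.image_insert, Finset.image_singleton, sg_sg, Finset.pair_comm]
  -- antisymmetry of partial derivatives
  have hstar : ∀ v : Fin n × Bool, pderiv (sg n v) u = -(pderiv v u) := by
    intro v
    have hst : IsStress n ℓ i Δ Θ (pderiv v u) := stress_pderiv hdown hu v
    have hs : rename (sg n) (pderiv v u) = pderiv v u := hsym _ hst
    have h2 : rename (sg n) (pderiv v u) = -(pderiv (sg n v) u) := by
      rw [← pderiv_rename sg_inj v u, hren_u, Derivation.map_neg]
    rw [h2] at hs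
    rw [← hs, neg_neg]
  -- key coefficient identity
  have hkey : ∀ (m : (Fin n × Bool) →₀ ℕ) (v : Fin n × Bool), 1 ≤ m v → m (sg n v) = 0 →
      coeff (m - Finsupp.single v 1 + Finsupp.single (sg n v) 1) u
        = -((m v : ℝ)) * coeff m u := by
    intro m v h1 h0
    have hsle : Finsupp.single v 1 ≤ m := Finsupp.single_le_iff.mpr h1
    have hm' : m - Finsupp.single v 1 + Finsupp.single v 1 = m :=
      tsub_add_cancel_of_le hsle
    have hthis := congrArg (coeff (m - Finsupp.single v 1)) (hstar v)
    rw [coeff_pderiv, coeff_neg, coeff_pderiv, hm'] at hthis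
    have e1 : ((m - Finsupp.single v 1 : (Fin n × Bool) →₀ ℕ)) (sg n v) = 0 := by
      rw [Finsupp.tsub_apply, Finsupp.single_apply,
        if_neg (fun h : v = sg n v => sg_ne v h.symm)]
      omega
    have e2 : ((m - Finsupp.single v 1 : (Fin n × Bool) →₀ ℕ)) v = m v - 1 := by
      rw [Finsupp.tsub_apply, Finsupp.single_apply, if_pos rfl]
    rw [e1, e2, Nat.cast_sub h1] at hthis
    push_cast at hthis
    linear_combination hthis
  -- multilinearity
  have hml : ∀ m : (Fin n × Bool) →₀ ℕ, coeff m u ≠ 0 → ∀ v, m v ≤ 1 := by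
    intro m hm v
    by_contra hgt
    push_neg at hgt
    have hF : m.support ∈ Δ := hu.2.1 m (mem_support_iff.mpr hm)
    have h0 : m (sg n v) = 0 := by
      by_contra h0
      exact hpair _ hF v (Finsupp.mem_support_iff.mpr (by omega))
        (Finsupp.mem_support_iff.mpr h0)
    have hc := hkey m v (by omega) h0
    have hne : coeff (m - Finsupp.single v 1 + Finsupp.single (sg n v) 1) u ≠ 0 := by
      rw [hc]
      apply mul_ne_zero _ hm
      simp only [neg_ne_zero, Nat.cast_ne_zero]
      omega
    have hF' := hu.2.1 _ (mem_support_iff.mpr hne)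
    refine hpair _ hF' v ?_ ?_
    · rw [Finsupp.mem_support_iff, flip_apply_self]
      omega
    · rw [Finsupp.mem_support_iff, flip_apply_sg]
      omega
  -- flip lemma
  have hflip : ∀ m : (Fin n × Bool) →₀ ℕ, coeff m u ≠ 0 → ∀ v, m v = 1 →
      coeff (m - Finsupp.single v 1 + Finsupp.single (sg n v) 1) u ≠ 0 := by
    intro m hm v h1
    have hF : m.support ∈ Δ := hu.2.1 m (mem_support_iff.mpr hm)
    have h0 : m (sg n v) = 0 := by
      by_contra h0
      exact hpair _ hF v (Finsupp.mem_support_iff.mpr (by omega))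
        (Finsupp.mem_support_iff.mpr h0)
    rw [hkey m v (by omega) h0, h1]
    simp only [Nat.cast_one, neg_mul, one_mul, neg_ne_zero]
    exact hm
  -- mixed second partials vanish
  have hmix : ∀ x y : Fin n × Bool, x.1 ≠ y.1 → pderiv x (pderiv y u) = 0 := by
    intro x y hxy
    have hd_yx : y ≠ x := fun hc => hxy (congrArg Prod.fst hc).symm
    have hd_xy : x ≠ y := fun hc => hxy (congrArg Prod.fst hc)
    have hd_sgx_x : sg n x ≠ x := sg_ne x
    have hd_sgy_y : sg n y ≠ y := sg_ne y
    have hd_sgy_x : sg n y ≠ x := fun hc => hxy (show x.1 = y.1 by rw [← hc])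
    have hd_sgx_y : sg n x ≠ y := fun hc => hxy (show x.1 = y.1 by rw [← hc])
    have hd_sgy_sgx : sg n y ≠ sg n x := fun hc => hd_yx (sg_inj hc)
    set h : MvPolynomial (Fin n × Bool) ℝ := pderiv x (pderiv y u) with hh
    have hhst : IsStress n ℓ (i - 1) Δ Θ h := by
      have h1' : IsStress n ℓ ((i - 1) + 1) Δ Θ (pderiv y u) := by
        have h1 : IsStress n ℓ i Δ Θ (pderiv y u) := stress_pderiv hdown hu y
        rwa [Nat.sub_add_cancel (le_of_lt hi)]
      exact stress_pderiv hdown h1' x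
    set s : MvPolynomial (Fin n × Bool) ℝ :=
      X x + X (sg n x) - X y - X (sg n y) with hs
    have hsupp_h : ∀ m' : (Fin n × Bool) →₀ ℕ, coeff m' h ≠ 0 →
        coeff (m' + Finsupp.single x 1 + Finsupp.single y 1) u ≠ 0 := by
      intro m' hm'
      rw [hh, coeff_pderiv, coeff_pderiv] at hm'
      intro h0
      rw [h0, mul_zero, mul_zero] at hm'
      exact hm' rfl
    have hq : IsStress n ℓ i Δ Θ (s * h) := by
      refine ⟨?_, ?_, ?_⟩
      · have hs1 : s.IsHomogeneous 1 := by
          rw [hs]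
          exact (((isHomogeneous_X _ _).add (isHomogeneous_X _ _)).sub
            (isHomogeneous_X _ _)).sub (isHomogeneous_X _ _)
        have hmul := hs1.mul hhst.1
        rwa [show 1 + (i - 1) = i by omega] at hmul
      · intro m hm
        rw [mem_support_iff] at hm
        have hexp : s * h = X x * h + X (sg n x) * h - X y * h - X (sg n y) * h := by
          rw [hs]; ring
        rw [hexp, coeff_sub, coeff_sub, coeff_add] at hm
        have hone : coeff m (X x * h) ≠ 0 ∨ coeff m (X (sg n x) * h) ≠ 0 ∨
            coeff m (X y * h) ≠ 0 ∨ coeff m (X (sg n y) * h) ≠ 0 := by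
          by_contra hall
          push_neg at hall
          rw [hall.1, hall.2.1, hall.2.2.1, hall.2.2.2] at hm
          simp at hm
        have hfacts : ∀ m' : (Fin n × Bool) →₀ ℕ, coeff m' h ≠ 0 →
            (coeff (m' + Finsupp.single x 1 + Finsupp.single y 1) u ≠ 0 ∧
             m' x = 0 ∧ m' y = 0) := by
          intro m' hm'
          have hM := hsupp_h m' hm'
          have hx1 := hml _ hM x
          have hy1 := hml _ hM y
          simp [Finsupp.add_apply, Finsupp.single_apply, hd_yx, hd_xy] at hx1 hy1
          exact ⟨hM, by omega, by omega⟩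
        have hsub_of_le : ∀ (a b : (Fin n × Bool) →₀ ℕ), (∀ c, a c ≤ b c) →
            coeff b u ≠ 0 → m = a → m.support ∈ Δ := by
          intro a b hab hbne hma
          refine hdown _ (hu.2.1 b (mem_support_iff.mpr hbne)) _ ?_
          intro c hc
          rw [hma] at hc
          rw [Finsupp.mem_support_iff] at hc ⊢
          have := hab c
          omega
        rcases hone with hz | hz | hz | hz
        · -- z = x
          rw [coeff_X_mul'] at hz
          split_ifs at hz with hmem
          · obtain ⟨hM, hm'x, hm'y⟩ := hfacts _ hz
            have hle : Finsupp.single x 1 ≤ m :=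
              Finsupp.single_le_iff.mpr (by
                rw [Finsupp.mem_support_iff] at hmem; omega)
            refine hsub_of_le (m - Finsupp.single x 1 + Finsupp.single x 1)
              (m - Finsupp.single x 1 + Finsupp.single x 1 + Finsupp.single y 1)
              (fun c => by simp only [Finsupp.add_apply]; omega)
              hM (tsub_add_cancel_of_le hle).symm
          · exact absurd rfl hz
        · -- z = sg x : flip needed
          rw [coeff_X_mul'] at hz
          split_ifs at hz with hmem
          · obtain ⟨hM, hm'x, hm'y⟩ := hfacts _ hz
            set m' : (Fin n × Bool) →₀ ℕ := m - Finsupp.single (sg n x) 1 with hm'def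
            set M : (Fin n × Bool) →₀ ℕ :=
              m' + Finsupp.single x 1 + Finsupp.single y 1 with hMdef
            have hMx : M x = 1 := by
              rw [hMdef]
              simp [Finsupp.add_apply, Finsupp.single_apply, hd_yx, hm'x]
            have hM' := hflip M hM x hMx
            have hMeq : M - Finsupp.single x 1 + Finsupp.single (sg n x) 1
                = m' + Finsupp.single y 1 + Finsupp.single (sg n x) 1 := by
              have he : M - Finsupp.single x 1 = m' + Finsupp.single y 1 := by
                rw [hMdef, add_right_comm, add_tsub_cancel_right]
              rw [he]
            rw [hMeq] at hM'
            have hle : Finsupp.single (sg n x) 1 ≤ m :=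
              Finsupp.single_le_iff.mpr (by
                rw [Finsupp.mem_support_iff] at hmem; omega)
            refine hsub_of_le (m' + Finsupp.single (sg n x) 1)
              (m' + Finsupp.single y 1 + Finsupp.single (sg n x) 1)
              (fun c => by simp only [Finsupp.add_apply]; omega)
              hM' ?_
            rw [hm'def]
            exact (tsub_add_cancel_of_le hle).symm
          · exact absurd rfl hz
        · -- z = y
          rw [coeff_X_mul'] at hz
          split_ifs at hz with hmem
          · obtain ⟨hM, hm'x, hm'y⟩ := hfacts _ hz
            have hle : Finsupp.single y 1 ≤ m :=
              Finsupp.single_le_iff.mpr (by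
                rw [Finsupp.mem_support_iff] at hmem; omega)
            refine hsub_of_le (m - Finsupp.single y 1 + Finsupp.single y 1)
              (m - Finsupp.single y 1 + Finsupp.single x 1 + Finsupp.single y 1)
              (fun c => by simp only [Finsupp.add_apply]; omega)
              hM (tsub_add_cancel_of_le hle).symm
          · exact absurd rfl hz
        · -- z = sg y : flip needed
          rw [coeff_X_mul'] at hz
          split_ifs at hz with hmem
          · obtain ⟨hM, hm'x, hm'y⟩ := hfacts _ hz
            set m' : (Fin n × Bool) →₀ ℕ := m - Finsupp.single (sg n y) 1 with hm'def
            set M : (Fin n × Bool) →₀ ℕ :=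
              m' + Finsupp.single x 1 + Finsupp.single y 1 with hMdef
            have hMy : M y = 1 := by
              rw [hMdef]
              simp [Finsupp.add_apply, Finsupp.single_apply, hd_xy, hm'y]
            have hM' := hflip M hM y hMy
            have hMeq : M - Finsupp.single y 1 + Finsupp.single (sg n y) 1
                = m' + Finsupp.single x 1 + Finsupp.single (sg n y) 1 := by
              have he : M - Finsupp.single y 1 = m' + Finsupp.single x 1 := by
                rw [hMdef, add_tsub_cancel_right]
              rw [he]
            rw [hMeq] at hM'
            have hle : Finsupp.single (sg n y) 1 ≤ m :=
              Finsupp.single_le_iff.mpr (by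
                rw [Finsupp.mem_support_iff] at hmem; omega)
            refine hsub_of_le (m' + Finsupp.single (sg n y) 1)
              (m' + Finsupp.single x 1 + Finsupp.single (sg n y) 1)
              (fun c => by simp only [Finsupp.add_apply]; omega)
              hM' ?_
            rw [hm'def]
            exact (tsub_add_cancel_of_le hle).symm
          · exact absurd rfl hz
      · intro k
        have hDs : Dop (Θ k) s = 0 := by
          rw [hs, Dop_sub, Dop_sub, Dop_add, Dop_X, Dop_X, Dop_X, Dop_X]
          rcases hΘ k with hk | hk
          · rw [show Θ k (sg n x) = -Θ k x from hk x,
              show Θ k (sg n y) = -Θ k y from hk y,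
              ← C_add, ← C_sub, ← C_sub,
              show Θ k x + -Θ k x - Θ k y - -Θ k y = 0 by ring, C_0]
          · rw [hk.2 x, hk.2 (sg n x), hk.2 y, hk.2 (sg n y),
              ← C_add, ← C_sub, ← C_sub,
              show (1 : ℝ) + 1 - 1 - 1 = 0 by ring, C_0]
        rw [Dop_mul, hDs, hhst.2.2 k, zero_mul, mul_zero, add_zero]
    have hqs : rename (sg n) (s * h) = s * h := hsym _ hq
    have hrs : rename (sg n) s = s := by
      rw [hs, map_sub, map_sub, map_add, rename_X, rename_X, rename_X, rename_X,
        sg_sg, sg_sg]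
      ring
    have hrh : rename (sg n) h = -h := by
      rw [hh, ← pderiv_rename sg_inj x, ← pderiv_rename sg_inj y, hren_u,
        Derivation.map_neg, hstar y, neg_neg, pderiv_comm' (sg n x) y, hstar x,
        Derivation.map_neg, pderiv_comm' y x]
    have hq2 : s * h = -(s * h) := by
      conv_lhs => rw [← hqs]
      rw [map_mul, hrs, hrh]
      ring
    have hq0 : s * h = 0 := by
      rw [MvPolynomial.eq_zero_iff]
      intro d
      have hc := congrArg (coeff d) hq2
      rw [coeff_neg] at hc
      linarith
    have hs0 : s ≠ 0 := by
      intro h0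
      have hc : coeff (Finsupp.single x 1) s = 1 := by
        rw [hs, coeff_sub, coeff_sub, coeff_add, coeff_X', coeff_X', coeff_X', coeff_X']
        rw [if_pos rfl,
          if_neg (fun hc => hd_sgx_x (by
            rcases (Finsupp.single_eq_single_iff _ _ _ _).mp hc with ⟨h1, _⟩ | ⟨h1, _⟩
            · exact h1
            · exact absurd h1 one_ne_zero)),
          if_neg (fun hc => hd_yx (by
            rcases (Finsupp.single_eq_single_iff _ _ _ _).mp hc with ⟨h1, _⟩ | ⟨h1, _⟩
            · exact h1
            · exact absurd h1 one_ne_zero)),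
          if_neg (fun hc => hd_sgy_x (by
            rcases (Finsupp.single_eq_single_iff _ _ _ _).mp hc with ⟨h1, _⟩ | ⟨h1, _⟩
            · exact h1
            · exact absurd h1 one_ne_zero))]
        ring
      rw [h0, coeff_zero] at hc
      exact one_ne_zero hc.symm
    rcases mul_eq_zero.mp hq0 with h0 | h0
    · exact absurd h0 hs0
    · exact h0
  -- conclude u = 0
  by_contra hne0
  obtain ⟨m, hm⟩ := exists_coeff_ne_zero hne0
  have hdeg : (Finsupp.weight (1 : (Fin n × Bool) → ℕ)) m = i + 1 := hu.1 hm
  have hdeg' : ∑ v ∈ m.support, m v = i + 1 := by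
    rw [Finsupp.weight_apply] at hdeg
    simpa [Finsupp.sum, Pi.one_apply, smul_eq_mul, mul_one] using hdeg
  have hcard : 1 < m.support.card := by
    by_contra hcard
    push_neg at hcard
    have hle : ∑ v ∈ m.support, m v ≤ m.support.card • 1 :=
      Finset.sum_le_card_nsmul _ _ 1 (fun v _ => hml m hm v)
    simp only [smul_eq_mul, mul_one] at hle
    omega
  obtain ⟨x, hx, y, hy, hxyne⟩ := Finset.one_lt_card.mp hcard
  have hxy1 : x.1 ≠ y.1 := by
    intro heq
    have hysg : y = sg n x := by
      have h2 : y.2 ≠ x.2 := fun hb => hxyne (Prod.ext heq hb.symm)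
      have h3 : y.2 = !x.2 := Bool.eq_not_iff.mpr h2
      exact Prod.ext heq.symm h3
    exact hpair _ (hu.2.1 m (mem_support_iff.mpr hm)) x hx (hysg ▸ hy)
  have h0 := hmix x y hxy1
  have hy1 : 1 ≤ m y := by
    rw [Finsupp.mem_support_iff] at hy; omega
  have hm1y : m - Finsupp.single y 1 + Finsupp.single y 1 = m :=
    tsub_add_cancel_of_le (Finsupp.single_le_iff.mpr hy1)
  have hm1x : 1 ≤ ((m - Finsupp.single y 1 : (Fin n × Bool) →₀ ℕ)) x := by
    rw [Finsupp.tsub_apply, Finsupp.single_apply,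
      if_neg (fun hc : y = x => hxy1 (congrArg Prod.fst hc).symm)]
    rw [Finsupp.mem_support_iff] at hx
    omega
  have hm2x : m - Finsupp.single y 1 - Finsupp.single x 1 + Finsupp.single x 1
      = m - Finsupp.single y 1 :=
    tsub_add_cancel_of_le (Finsupp.single_le_iff.mpr hm1x)
  have hcc := congrArg (coeff (m - Finsupp.single y 1 - Finsupp.single x 1)) h0
  rw [coeff_pderiv, hm2x, coeff_pderiv, hm1y, coeff_zero] at hcc
  rcases mul_eq_zero.mp hcc with hbad | hbad
  · exact absurd hbad (by positivity)
  rcases mul_eq_zero.mp hbad with hbad' | hbad'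
  · exact absurd hbad' (by positivity)
  · exact hm hbad'
end
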